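/- Lemma on numerator bound (fundamental lemma): let Aₙ ⊆ 𝔽 be convex and d εₙ²-separated from f⋆ with respect to h, i.e., h(f⋆,f) > d εₙ² for all f ∈ Aₙ and Aₙ closed under mixtures. Then the numerator L_{n,n} = ∫_{Aₙ} ∏_{i=1}^{n} (f(Y_i)/f⋆(Y_i)) dΠ(f) satisfies E[L_{n,n}^{1/2}] ≤ Π(Aₙ)^{1/2} e^{−d n εₙ²}. -/

import Mathlib

open MeasureTheory Real Finset

def NBIndist {Y : Type*} [MeasurableSpace Y] (a b : Y) : Prop :=
  ∀ E : Set Y, MeasurableSet E → (a ∈ E ↔ b ∈ E)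

lemma nbIndist_eq {Y : Type*} [MeasurableSpace Y] {β : Type*} [MeasurableSpace β]
    [MeasurableSingletonClass β] {a b : Y} (h : NBIndist a b) {f : Y → β}
    (hf : Measurable f) : f a = f b := by
  have := (h (f ⁻¹' {f a}) (hf (measurableSet_singleton _))).mp rfl
  simpa using this.symm

/-- Every measurable set in a pi measurable space depends on countably many coordinates. -/
lemma nb_exists_countable_dependence {Y : Type*} [MeasurableSpace Y] {A : Set (Y → ℝ)}
    (hA : MeasurableSet A) :
    ∃ D : Set Y, D.Countable ∧
      ∀ g g' : Y → ℝ, (∀ y ∈ D, g y = g' y) → (g ∈ A ↔ g' ∈ A) := by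
  let m : MeasurableSpace (Y → ℝ) :=
    { MeasurableSet' := fun A => ∃ D : Set Y, D.Countable ∧
        ∀ g g' : Y → ℝ, (∀ y ∈ D, g y = g' y) → (g ∈ A ↔ g' ∈ A)
      measurableSet_empty := ⟨∅, Set.countable_empty, fun _ _ _ => Iff.rfl⟩
      measurableSet_compl := by
        rintro A ⟨D, hD, hinv⟩
        exact ⟨D, hD, fun g g' h => not_congr (hinv g g' h)⟩
      measurableSet_iUnion := by
        rintro f hf
        choose D hD hinv using hf
        refine ⟨⋃ i, D i, Set.countable_iUnion hD, fun g g' h => ?_⟩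
        simp only [Set.mem_iUnion]
        exact exists_congr fun i => hinv i g g' fun y hy => h y (Set.mem_iUnion.2 ⟨i, hy⟩) }
  have hle : (MeasurableSpace.pi : MeasurableSpace (Y → ℝ)) ≤ m := by
    refine iSup_le fun y => ?_
    rintro s ⟨s', _, rfl⟩
    exact ⟨{y}, Set.countable_singleton y, fun g g' h => by
      simp [Set.mem_preimage, h y rfl]⟩
  exact hle A hA

/-- Construction of a countable-range measurable-fibers retraction onto
representatives of indistinguishability classes of a countable measurable set. -/
lemma nb_exists_retraction {Y : Type*} [MeasurableSpace Y] (e : ℕ → Y)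
    (hRm : MeasurableSet (Set.range e)) :
    ∃ ρ : Y → Y, (Set.range ρ).Countable ∧ (∀ v, MeasurableSet (ρ ⁻¹' {v})) ∧
      ∀ y ∈ Set.range e, NBIndist y (ρ y) := by
  classical
  have hsep : ∀ i j : ℕ, ∃ F : Set Y, MeasurableSet F ∧ e i ∈ F ∧
      (¬ NBIndist (e i) (e j) → e j ∉ F) := by
    intro i j
    by_cases h : NBIndist (e i) (e j)
    · exact ⟨Set.univ, MeasurableSet.univ, trivial, fun h' => absurd h h'⟩
    · simp only [NBIndist, not_forall] at h
      obtain ⟨E, hE, hiff⟩ := h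
      by_cases hi : e i ∈ E
      · exact ⟨E, hE, hi, fun _ hj => hiff ⟨fun _ => hj, fun _ => hi⟩⟩
      · exact ⟨Eᶜ, hE.compl, hi, fun _ hj =>
          hiff ⟨fun h' => absurd h' hi, fun h' => absurd h' hj⟩⟩
  choose sep hsepm hsepi hsepj using hsep
  set C : ℕ → Set Y := fun i => (⋂ j, sep i j) ∩ Set.range e with hCdef
  have hCm : ∀ i, MeasurableSet (C i) :=
    fun i => (MeasurableSet.iInter fun j => hsepm i j).inter hRm
  have hCe : ∀ i, e i ∈ C i :=
    fun i => ⟨Set.mem_iInter.2 fun j => hsepi i j, ⟨i, rfl⟩⟩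
  have hCind : ∀ i, ∀ z ∈ C i, NBIndist z (e i) := by
    rintro i z ⟨hz1, j, rfl⟩
    by_contra h
    have h' : ¬ NBIndist (e i) (e j) := fun hi => h (fun E hE => (hi E hE).symm)
    exact hsepj i j h' (Set.mem_iInter.1 hz1 j)
  set idx : Y → ℕ := fun y => if h : ∃ i, y ∈ C i then Nat.find h else 0 with hidx
  have hidxfib : ∀ i, MeasurableSet (idx ⁻¹' {i}) := by
    intro i
    have : idx ⁻¹' {i} =
        (C i ∩ (⋂ k ∈ Set.Iio i, (C k)ᶜ)) ∪
          (if i = 0 then (⋃ k, C k)ᶜ else ∅) := by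
      ext y
      simp only [Set.mem_preimage, Set.mem_singleton_iff, hidx]
      by_cases h : ∃ k, y ∈ C k
      · simp only [dif_pos h]
        rw [Nat.find_eq_iff h]
        constructor
        · rintro ⟨h1, h2⟩
          refine Or.inl ⟨h1, ?_⟩
          simp only [Set.mem_iInter, Set.mem_compl_iff]
          exact fun k hk => h2 k hk
        · rintro (⟨h1, h2⟩ | hbad)
          · refine ⟨h1, fun k hk => ?_⟩
            simp only [Set.mem_iInter, Set.mem_compl_iff] at h2
            exact h2 k hk
          · exfalso
            rcases i with _ | i
            · simp only [if_pos rfl, Set.mem_compl_iff, Set.mem_iUnion] at hbad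
              exact hbad (Set.mem_iUnion.2 h)
            · simp at hbad
      · simp only [dif_neg h]
        constructor
        · rintro rfl
          refine Or.inr ?_
          simp only [if_pos rfl, Set.mem_compl_iff, Set.mem_iUnion]
          exact fun hk => h (Set.mem_iUnion.1 hk)
        · rintro (⟨h1, _⟩ | hbad)
          · exact absurd ⟨i, h1⟩ h
          · rcases i with _ | i
            · rfl
            · simp at hbad
    rw [this]
    refine ((hCm i).inter (MeasurableSet.biInter (Set.to_countable _)
      fun k _ => (hCm k).compl)).union ?_
    split
    · exact (MeasurableSet.iUnion hCm).compl
    · exact MeasurableSet.empty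
  refine ⟨fun y => e (idx y), (Set.countable_range e).mono (by
      rintro v ⟨y, rfl⟩; exact ⟨idx y, rfl⟩), ?_, ?_⟩
  · intro v
    have : (fun y => e (idx y)) ⁻¹' {v} = ⋃ i ∈ {i : ℕ | e i = v}, idx ⁻¹' {i} := by
      ext y
      simp only [Set.mem_preimage, Set.mem_singleton_iff, Set.mem_iUnion, Set.mem_setOf_eq]
      exact ⟨fun h => ⟨idx y, h, rfl⟩, by rintro ⟨i, hi, rfl⟩; exact hi⟩
    rw [this]
    exact MeasurableSet.biUnion (Set.to_countable _) fun i _ => hidxfib i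
  · rintro y ⟨j, rfl⟩
    have hy : ∃ i, e j ∈ C i := ⟨j, hCe j⟩
    have : idx (e j) = Nat.find hy := dif_pos hy
    show NBIndist (e j) (e (idx (e j)))
    rw [this]
    exact hCind _ _ (Nat.find_spec hy)

lemma nb_measurable_eval_retract {Y Z W : Type*} [MeasurableSpace Y] [MeasurableSpace Z]
    [MeasurableSpace W] (ρ : Y → Y) (hr : (Set.range ρ).Countable)
    (hf : ∀ v, MeasurableSet (ρ ⁻¹' {v})) (F : Y → Z → W) (hF : ∀ v, Measurable (F v)) :
    Measurable fun p : Y × Z => F (ρ p.1) p.2 := by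
  intro S hS
  have : (fun p : Y × Z => F (ρ p.1) p.2) ⁻¹' S
      = ⋃ v ∈ Set.range ρ, (ρ ⁻¹' {v}) ×ˢ (F v ⁻¹' S) := by
    ext ⟨y, z⟩
    simp only [Set.mem_preimage, Set.mem_iUnion, Set.mem_prod, Set.mem_singleton_iff]
    constructor
    · intro h; exact ⟨ρ y, ⟨y, rfl⟩, rfl, h⟩
    · rintro ⟨v, _, rfl, h⟩; exact h
  rw [this]
  exact MeasurableSet.biUnion hr fun v _ => (hf v).prod (hF v hS)

lemma nb_integrable_of_integral_eq_one' {Y : Type*} [MeasurableSpace Y] {μ : Measure Y}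
    {f : Y → ℝ} (h : ∫ y, f y ∂μ = 1) : Integrable f μ := by
  by_contra hc; rw [integral_undef hc] at h; norm_num at h

/-- Hellinger-type expansion. -/
lemma nb_cross {Y : Type*} [MeasurableSpace Y] (μ : Measure Y) (fstar g : Y → ℝ)
    (hfm : Measurable fstar) (hfn : ∀ y, 0 ≤ fstar y) (hfi : ∫ y, fstar y ∂μ = 1)
    (hgm : Measurable g) (hgn : ∀ y, 0 ≤ g y) (hgi : ∫ y, g y ∂μ = 1) :
    Integrable (fun y => Real.sqrt (fstar y) * Real.sqrt (g y)) μ ∧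
    0 ≤ ∫ y, Real.sqrt (fstar y) * Real.sqrt (g y) ∂μ ∧
    (1/2) * ∫ y, (Real.sqrt (fstar y) - Real.sqrt (g y))^2 ∂μ
      = 1 - ∫ y, Real.sqrt (fstar y) * Real.sqrt (g y) ∂μ := by
  have If : Integrable fstar μ := nb_integrable_of_integral_eq_one' hfi
  have Ig : Integrable g μ := nb_integrable_of_integral_eq_one' hgi
  have hHm : Measurable fun y => Real.sqrt (fstar y) * Real.sqrt (g y) :=
    (hfm.sqrt).mul (hgm.sqrt)
  have hHn : ∀ y, 0 ≤ Real.sqrt (fstar y) * Real.sqrt (g y) :=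
    fun y => mul_nonneg (Real.sqrt_nonneg _) (Real.sqrt_nonneg _)
  have hbound : ∀ y, Real.sqrt (fstar y) * Real.sqrt (g y) ≤ (fstar y + g y) / 2 := by
    intro y
    have h2 : 2 * (Real.sqrt (fstar y) * Real.sqrt (g y))
        ≤ Real.sqrt (fstar y) ^ 2 + Real.sqrt (g y) ^ 2 := by
      nlinarith [sq_nonneg (Real.sqrt (fstar y) - Real.sqrt (g y))]
    rw [Real.sq_sqrt (hfn y), Real.sq_sqrt (hgn y)] at h2
    linarith
  have IH : Integrable (fun y => Real.sqrt (fstar y) * Real.sqrt (g y)) μ := by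
    refine Integrable.mono' ((If.add Ig).div_const 2) hHm.aestronglyMeasurable ?_
    filter_upwards with y
    rw [Real.norm_eq_abs, abs_of_nonneg (hHn y)]
    exact hbound y
  have hpt : ∀ y, (Real.sqrt (fstar y) - Real.sqrt (g y))^2
      = fstar y + g y - 2 * (Real.sqrt (fstar y) * Real.sqrt (g y)) := by
    intro y
    have h1 : Real.sqrt (fstar y) ^ 2 = fstar y := Real.sq_sqrt (hfn y)
    have h2 : Real.sqrt (g y) ^ 2 = g y := Real.sq_sqrt (hgn y)
    nlinarith
  have : ∫ y, (Real.sqrt (fstar y) - Real.sqrt (g y))^2 ∂μ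
      = 1 + 1 - 2 * ∫ y, Real.sqrt (fstar y) * Real.sqrt (g y) ∂μ := by
    rw [show (fun y => (Real.sqrt (fstar y) - Real.sqrt (g y))^2)
        = fun y => fstar y + g y - 2 * (Real.sqrt (fstar y) * Real.sqrt (g y)) from
        funext hpt]
    have h1 : Integrable (fun y => fstar y + g y) μ := If.add Ig
    have h2 : Integrable (fun y => 2 * (Real.sqrt (fstar y) * Real.sqrt (g y))) μ :=
      IH.const_mul 2
    rw [integral_sub h1 h2, integral_add If Ig, MeasureTheory.integral_const_mul, hfi, hgi]
  refine ⟨IH, integral_nonneg (fun y => hHn y), by rw [this]; ring⟩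

/-- THE KEY one-step bound. -/
lemma nb_key {Y : Type*} [MeasurableSpace Y] (μ : Measure Y) [SigmaFinite μ]
    (fstar : Y → ℝ) (hstarmeas : Measurable fstar) (hstarnn : ∀ y, 0 ≤ fstar y)
    (hstarint : ∫ y, fstar y ∂μ = 1) (hstarpos : ∀ y, 0 < fstar y)
    (d ε : ℝ)
    (A : Set (Y → ℝ)) (hA : MeasurableSet A)
    (hdens : ∀ g ∈ A, Measurable g ∧ (∀ y, 0 ≤ g y) ∧ ∫ y, g y ∂μ = 1)
    (hsep : ∀ g ∈ A,
      d * ε^2 < (1/2) * ∫ y, (Real.sqrt (fstar y) - Real.sqrt (g y))^2 ∂μ)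
    (ρ : Y → Y) (hρr : (Set.range ρ).Countable) (hρf : ∀ v, MeasurableSet (ρ ⁻¹' {v}))
    (hρae : ∀ᵐ y ∂μ, NBIndist y (ρ y))
    (Φ : Measure (Y → ℝ)) [IsProbabilityMeasure Φ] (hΦA : Φ A = 1)
    (hconvΦ : (fun y => ∫ g, g y ∂Φ) ∈ A) :
    ∫⁻ y, ((∫⁻ g, ENNReal.ofReal (g y) ∂Φ) * (ENNReal.ofReal (fstar y))⁻¹) ^ (1/2 : ℝ)
        ∂(μ.withDensity fun y => ENNReal.ofReal (fstar y))
      ≤ ENNReal.ofReal (1 - d * ε^2) := by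
  classical
  set fhat : Y → ℝ := fun y => ∫ g, g y ∂Φ with hfhat
  obtain ⟨hfm, hfn, hfi⟩ := hdens _ hconvΦ
  -- a.e. membership in A
  have hΦAc : Φ Aᶜ = 0 := by
    have := measure_compl hA (measure_ne_top Φ A)
    rw [hΦA, measure_univ] at this
    simpa using this
  have aeA : ∀ᵐ g ∂Φ, g ∈ A := by
    rw [Filter.eventually_iff, mem_ae_iff]
    simpa using hΦAc
  set Sp : Y → ENNReal := fun y => ∫⁻ g, ENNReal.ofReal (g y) ∂Φ with hSp
  -- jointly measurable modification of evaluation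
  have hGmeas : Measurable fun p : Y × (Y → ℝ) => ENNReal.ofReal (p.2 (ρ p.1)) := by
    have := nb_measurable_eval_retract ρ hρr hρf
      (fun v (g : Y → ℝ) => ENNReal.ofReal (g v))
      (fun v => ENNReal.measurable_ofReal.comp (measurable_pi_apply v))
    exact this
  have hGae : (fun p : Y × (Y → ℝ) => ENNReal.ofReal (p.2 p.1))
      =ᵐ[μ.prod Φ] fun p => ENNReal.ofReal (p.2 (ρ p.1)) := by
    rw [Filter.eventuallyEq_iff_exists_mem]
    refine ⟨({y | NBIndist y (ρ y)} ×ˢ A : Set (Y × (Y → ℝ))), ?_, ?_⟩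
    · rw [mem_ae_iff]
      have hsub : (({y | NBIndist y (ρ y)} ×ˢ A : Set (Y × (Y → ℝ))))ᶜ
          ⊆ ({y | NBIndist y (ρ y)}ᶜ ×ˢ Set.univ) ∪ (Set.univ ×ˢ Aᶜ) := by
        rintro ⟨y, g⟩ hp
        simp only [Set.mem_compl_iff, Set.mem_prod, not_and_or] at hp
        rcases hp with h | h
        · exact Or.inl ⟨h, trivial⟩
        · exact Or.inr ⟨trivial, h⟩
      refine measure_mono_null hsub (measure_union_null ?_ ?_)
      · rw [Measure.prod_prod]
        have : μ {y | NBIndist y (ρ y)}ᶜ = 0 := by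
          rw [← mem_ae_iff]; simpa [Filter.eventually_iff] using hρae
        simp [this]
      · rw [Measure.prod_prod, hΦAc]; simp
    · rintro ⟨y, g⟩ ⟨hy, hg⟩
      simp only
      rw [nbIndist_eq hy (hdens g hg).1]
  have hSpint : ∫⁻ y, Sp y ∂μ = 1 := by
    have hswap := lintegral_lintegral_swap (μ := μ) (ν := Φ)
      (f := fun y g => ENNReal.ofReal (g y))
      ⟨_, hGmeas, hGae⟩
    rw [hSp]
    simp only []
    rw [hswap]
    have : ∀ᵐ g ∂Φ, ∫⁻ y, ENNReal.ofReal (g y) ∂μ = 1 := by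
      filter_upwards [aeA] with g hg
      obtain ⟨hgm, hgn, hgi⟩ := hdens g hg
      have := ofReal_integral_eq_lintegral_ofReal (nb_integrable_of_integral_eq_one' hgi)
        (Filter.Eventually.of_forall hgn)
      rw [hgi] at this
      simpa using this.symm
    rw [lintegral_congr_ae this]
    simp
  have hSpae : AEMeasurable Sp μ := by
    refine ⟨fun y => ∫⁻ g, ENNReal.ofReal (g (ρ y)) ∂Φ, ?_, ?_⟩
    · exact Measurable.lintegral_prod_right' (f := fun p : Y × (Y → ℝ) =>
        ENNReal.ofReal (p.2 (ρ p.1))) hGmeas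
    · filter_upwards [hρae] with y hy
      refine lintegral_congr_ae ?_
      filter_upwards [aeA] with g hg
      rw [nbIndist_eq hy (hdens g hg).1]
  have hSplt : ∀ᵐ y ∂μ, Sp y < ⊤ := ae_lt_top' hSpae (by rw [hSpint]; simp)
  have hSpeq : Sp =ᵐ[μ] fun y => ENNReal.ofReal (fhat y) := by
    filter_upwards [hSplt] with y hy
    have heval : ∀ᵐ g ∂Φ, (‖g y‖₊ : ENNReal) = ENNReal.ofReal (g y) := by
      filter_upwards [aeA] with g hg
      exact Real.enorm_eq_ofReal ((hdens g hg).2.1 y)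
    have hint : Integrable (fun g => g y) Φ := by
      constructor
      · exact (measurable_pi_apply y).aestronglyMeasurable
      · rw [HasFiniteIntegral]
        calc ∫⁻ g, (‖g y‖₊ : ENNReal) ∂Φ = Sp y := lintegral_congr_ae heval
        _ < ⊤ := hy
    have := ofReal_integral_eq_lintegral_ofReal hint
      (by filter_upwards [aeA] with g hg; exact (hdens g hg).2.1 y)
    rw [lintegral_congr_ae (g := fun g => ENNReal.ofReal (g y)) ?_] at this
    · exact this.symm
    · exact Filter.EventuallyEq.rfl
  -- main calculation
  obtain ⟨Icross, hcross_nn, hcross_eq⟩ := nb_cross μ fstar fhat hstarmeas hstarnn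
    hstarint hfm hfn hfi
  have hub : ∫ y, Real.sqrt (fstar y) * Real.sqrt (fhat y) ∂μ ≤ 1 - d * ε^2 := by
    have := hsep _ hconvΦ
    rw [hcross_eq] at this
    linarith
  have hpt : ∀ y, ENNReal.ofReal (fstar y)
        * ((ENNReal.ofReal (fhat y) * (ENNReal.ofReal (fstar y))⁻¹) ^ (1/2 : ℝ))
      = ENNReal.ofReal (Real.sqrt (fstar y) * Real.sqrt (fhat y)) := by
    intro y
    set a := ENNReal.ofReal (fstar y) with hadef
    set x := ENNReal.ofReal (fhat y) with hxdef
    have ha0 : a ≠ 0 := by simp [hadef, ENNReal.ofReal_eq_zero, not_le, hstarpos y]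
    have haT : a ≠ ⊤ := ENNReal.ofReal_ne_top
    have hhalf : a ^ (1/2 : ℝ) * a ^ (1/2 : ℝ) = a := by
      rw [← ENNReal.rpow_add _ _ ha0 haT]; norm_num
    have h0 : a ^ (1/2 : ℝ) ≠ 0 := by
      simp [ENNReal.rpow_eq_zero_iff, ha0, haT]
    have hT : a ^ (1/2 : ℝ) ≠ ⊤ := ENNReal.rpow_ne_top_of_nonneg (by norm_num) haT
    have key : a * ((x * a⁻¹) ^ (1/2 : ℝ)) = x ^ (1/2 : ℝ) * a ^ (1/2 : ℝ) := by
      rw [ENNReal.mul_rpow_of_nonneg _ _ (by norm_num : (0:ℝ) ≤ 1/2), ENNReal.inv_rpow]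
      calc a * (x ^ (1/2:ℝ) * (a ^ (1/2:ℝ))⁻¹)
          = x ^ (1/2:ℝ) * (a * (a ^ (1/2:ℝ))⁻¹) := by ring
        _ = x ^ (1/2:ℝ) * ((a ^ (1/2:ℝ) * a ^ (1/2:ℝ)) * (a ^ (1/2:ℝ))⁻¹) := by rw [hhalf]
        _ = x ^ (1/2:ℝ) * (a ^ (1/2:ℝ) * (a ^ (1/2:ℝ) * (a ^ (1/2:ℝ))⁻¹)) := by ring
        _ = x ^ (1/2:ℝ) * a ^ (1/2:ℝ) := by rw [ENNReal.mul_inv_cancel h0 hT, mul_one]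
    rw [key, ENNReal.ofReal_mul (Real.sqrt_nonneg _),
      Real.sqrt_eq_rpow, Real.sqrt_eq_rpow,
      ENNReal.ofReal_rpow_of_nonneg (hstarnn y) (by norm_num),
      ENNReal.ofReal_rpow_of_nonneg (hfn y) (by norm_num)]
    ring
  have hmeas2 : Measurable fun y =>
      (ENNReal.ofReal (fhat y) * (ENNReal.ofReal (fstar y))⁻¹) ^ (1/2 : ℝ) := by
    have : Measurable fun y => ENNReal.ofReal (fhat y) * (ENNReal.ofReal (fstar y))⁻¹ :=
      (ENNReal.measurable_ofReal.comp hfm).mul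
        ((ENNReal.measurable_ofReal.comp hstarmeas).inv)
    exact this.pow_const _
  calc ∫⁻ y, ((Sp y) * (ENNReal.ofReal (fstar y))⁻¹) ^ (1/2 : ℝ)
        ∂(μ.withDensity fun y => ENNReal.ofReal (fstar y))
      = ∫⁻ y, ((ENNReal.ofReal (fhat y)) * (ENNReal.ofReal (fstar y))⁻¹) ^ (1/2 : ℝ)
        ∂(μ.withDensity fun y => ENNReal.ofReal (fstar y)) := by
        refine lintegral_congr_ae ?_
        refine (withDensity_absolutelyContinuous μ _).ae_eq ?_
        filter_upwards [hSpeq] with y hy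
        rw [hy]
    _ = ∫⁻ y, ENNReal.ofReal (fstar y)
          * ((ENNReal.ofReal (fhat y) * (ENNReal.ofReal (fstar y))⁻¹) ^ (1/2 : ℝ)) ∂μ := by
        rw [lintegral_withDensity_eq_lintegral_mul μ
          (hstarmeas.ennreal_ofReal) hmeas2]
        rfl
    _ = ∫⁻ y, ENNReal.ofReal (Real.sqrt (fstar y) * Real.sqrt (fhat y)) ∂μ :=
        lintegral_congr hpt
    _ = ENNReal.ofReal (∫ y, Real.sqrt (fstar y) * Real.sqrt (fhat y) ∂μ) :=
        (ofReal_integral_eq_lintegral_ofReal Icross (Filter.Eventually.of_forall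
          fun y => mul_nonneg (Real.sqrt_nonneg _) (Real.sqrt_nonneg _))).symm
    _ ≤ ENNReal.ofReal (1 - d * ε^2) := ENNReal.ofReal_le_ofReal hub

/-- One-step predictive bound, for every fixed past `ω`. -/
lemma nb_step {Y : Type*} [MeasurableSpace Y] (μ : Measure Y) [SigmaFinite μ]
    (fstar : Y → ℝ) (hstarmeas : Measurable fstar) (hstarnn : ∀ y, 0 ≤ fstar y)
    (hstarint : ∫ y, fstar y ∂μ = 1) (hstarpos : ∀ y, 0 < fstar y)
    (d ε : ℝ)
    (A : Set (Y → ℝ)) (hA : MeasurableSet A)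
    (hdens : ∀ g ∈ A, Measurable g ∧ (∀ y, 0 ≤ g y) ∧ ∫ y, g y ∂μ = 1)
    (hsep : ∀ g ∈ A,
      d * ε^2 < (1/2) * ∫ y, (Real.sqrt (fstar y) - Real.sqrt (g y))^2 ∂μ)
    (hconv : ∀ Φ : Measure (Y → ℝ), IsProbabilityMeasure Φ → Φ A = 1 →
      (fun y => ∫ g, g y ∂Φ) ∈ A)
    (ρ : Y → Y) (hρr : (Set.range ρ).Countable) (hρf : ∀ v, MeasurableSet (ρ ⁻¹' {v}))
    (hρae : ∀ᵐ y ∂μ, NBIndist y (ρ y))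
    (Pr : Measure (Y → ℝ))
    (g0 : Y → ℝ) (hg0 : g0 ∈ A)
    {n : ℕ} (ω : Fin n → Y) :
    ∫⁻ y, (∫⁻ g in A,
        ENNReal.ofReal ((∏ i, g (ω i) / fstar (ω i)) * (g y / fstar y)) ∂Pr) ^ (1/2 : ℝ)
      ∂(μ.withDensity fun y => ENNReal.ofReal (fstar y))
    ≤ ENNReal.ofReal (1 - d * ε^2)
      * (∫⁻ g in A, ENNReal.ofReal (∏ i, g (ω i) / fstar (ω i)) ∂Pr) ^ (1/2 : ℝ) := by
  classical
  have hdeps : d * ε^2 < 1 := by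
    obtain ⟨hgm, hgn, hgi⟩ := hdens g0 hg0
    obtain ⟨_, hnn, heq⟩ := nb_cross μ fstar g0 hstarmeas hstarnn hstarint hgm hgn hgi
    have := hsep g0 hg0
    rw [heq] at this
    linarith
  set W : (Y → ℝ) → ENNReal := fun g => ENNReal.ofReal (∏ i, g (ω i) / fstar (ω i))
    with hW
  have hWm : Measurable W := by
    refine Measurable.ennreal_ofReal ?_
    exact Finset.measurable_prod _ fun i _ => (measurable_pi_apply (ω i)).div_const _
  set Q : Measure (Y → ℝ) := (Pr.restrict A).withDensity W with hQ
  set c : ENNReal := ∫⁻ g in A, W g ∂Pr with hc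
  have hQuniv : Q Set.univ = c := by
    rw [hQ, withDensity_apply _ MeasurableSet.univ, Measure.restrict_univ]
  have hQA : Q A = c := by
    rw [hQ, withDensity_apply _ hA, Measure.restrict_restrict hA, Set.inter_self]
  have hΛ' : ∀ y, (∫⁻ g in A,
      ENNReal.ofReal ((∏ i, g (ω i) / fstar (ω i)) * (g y / fstar y)) ∂Pr)
      = ∫⁻ g, ENNReal.ofReal (g y) * (ENNReal.ofReal (fstar y))⁻¹ ∂Q := by
    intro y
    have hmy : Measurable fun g : Y → ℝ =>
        ENNReal.ofReal (g y) * (ENNReal.ofReal (fstar y))⁻¹ :=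
      (measurable_pi_apply y).ennreal_ofReal.mul_const _
    calc (∫⁻ g in A,
        ENNReal.ofReal ((∏ i, g (ω i) / fstar (ω i)) * (g y / fstar y)) ∂Pr)
        = ∫⁻ g in A,
            (W * fun g' : Y → ℝ => ENNReal.ofReal (g' y) * (ENNReal.ofReal (fstar y))⁻¹) g
            ∂Pr := by
          refine setLIntegral_congr_fun hA (fun g hg => ?_)
          have hprodnn : 0 ≤ ∏ i, g (ω i) / fstar (ω i) :=
            Finset.prod_nonneg fun i _ => div_nonneg ((hdens g hg).2.1 _) (hstarpos _).le
          simp only [Pi.mul_apply, hW]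
          rw [ENNReal.ofReal_mul hprodnn, ENNReal.ofReal_div_of_pos (hstarpos y),
            ENNReal.div_eq_inv_mul]
          ring
      _ = ∫⁻ g, ENNReal.ofReal (g y) * (ENNReal.ofReal (fstar y))⁻¹ ∂Q := by
          rw [hQ, lintegral_withDensity_eq_lintegral_mul _ hWm
            (g := fun g' : Y → ℝ => ENNReal.ofReal (g' y) * (ENNReal.ofReal (fstar y))⁻¹)
            hmy]
  rcases eq_or_ne c 0 with hc0 | hc0
  · have hQz : Q = 0 := by
      rw [← Measure.measure_univ_eq_zero, hQuniv, hc0]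
    have : ∀ y, (∫⁻ g in A,
        ENNReal.ofReal ((∏ i, g (ω i) / fstar (ω i)) * (g y / fstar y)) ∂Pr) ^ (1/2 : ℝ)
        = 0 := by
      intro y
      rw [hΛ' y, hQz]
      simp [ENNReal.zero_rpow_of_pos (by norm_num : (0:ℝ) < 1/2)]
    rw [lintegral_congr this]
    simp
  rcases eq_or_ne c ⊤ with hcT | hcT
  · refine le_trans le_top (le_of_eq ?_)
    rw [hcT, ENNReal.top_rpow_of_pos (by norm_num : (0:ℝ) < 1/2), ENNReal.mul_top ?_]
    simp only [ne_eq, ENNReal.ofReal_eq_zero, not_le]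
    linarith
  · set Φ : Measure (Y → ℝ) := c⁻¹ • Q with hΦ
    haveI : IsProbabilityMeasure Φ := by
      constructor
      rw [hΦ, Measure.smul_apply, hQuniv, smul_eq_mul, ENNReal.inv_mul_cancel hc0 hcT]
    have hΦA : Φ A = 1 := by
      rw [hΦ, Measure.smul_apply, hQA, smul_eq_mul, ENNReal.inv_mul_cancel hc0 hcT]
    have hQsmul : Q = c • Φ := by
      rw [hΦ, smul_smul, ENNReal.mul_inv_cancel hc0 hcT, one_smul]
    have hconvΦ := hconv Φ inferInstance hΦA
    have hkey := nb_key μ fstar hstarmeas hstarnn hstarint hstarpos d ε A hA hdens hsep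
      ρ hρr hρf hρae Φ hΦA hconvΦ
    have hmyΦ : ∀ y, Measurable fun g : Y → ℝ => ENNReal.ofReal (g y) :=
      fun y => (measurable_pi_apply y).ennreal_ofReal
    have hrw : ∀ y, (∫⁻ g in A,
        ENNReal.ofReal ((∏ i, g (ω i) / fstar (ω i)) * (g y / fstar y)) ∂Pr)
        = c * ((∫⁻ g, ENNReal.ofReal (g y) ∂Φ) * (ENNReal.ofReal (fstar y))⁻¹) := by
      intro y
      rw [hΛ' y, lintegral_mul_const _ (hmyΦ y), hQsmul, lintegral_smul_measure]
      ring
    calc ∫⁻ y, (∫⁻ g in A,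
          ENNReal.ofReal ((∏ i, g (ω i) / fstar (ω i)) * (g y / fstar y)) ∂Pr) ^ (1/2 : ℝ)
        ∂(μ.withDensity fun y => ENNReal.ofReal (fstar y))
        = ∫⁻ y, c ^ (1/2:ℝ)
            * (((∫⁻ g, ENNReal.ofReal (g y) ∂Φ) * (ENNReal.ofReal (fstar y))⁻¹) ^ (1/2:ℝ))
          ∂(μ.withDensity fun y => ENNReal.ofReal (fstar y)) := by
          refine lintegral_congr fun y => ?_
          rw [hrw y, ENNReal.mul_rpow_of_nonneg _ _ (by norm_num : (0:ℝ) ≤ 1/2)]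
      _ = c ^ (1/2:ℝ) * ∫⁻ y,
            ((∫⁻ g, ENNReal.ofReal (g y) ∂Φ) * (ENNReal.ofReal (fstar y))⁻¹) ^ (1/2:ℝ)
          ∂(μ.withDensity fun y => ENNReal.ofReal (fstar y)) :=
          lintegral_const_mul' _ _ (ENNReal.rpow_ne_top_of_nonneg (by norm_num) hcT)
      _ ≤ c ^ (1/2:ℝ) * ENNReal.ofReal (1 - d * ε^2) := mul_le_mul_right hkey _
      _ = ENNReal.ofReal (1 - d * ε^2) * c ^ (1/2:ℝ) := mul_comm _ _

lemma nb_countable_pi {ι : Type*} [Finite ι] {α : Type*} {s : Set α} (hs : s.Countable) :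
    {f : ι → α | ∀ i, f i ∈ s}.Countable := by
  haveI := hs.to_subtype
  have : {f : ι → α | ∀ i, f i ∈ s} ⊆ Set.range (fun (g : ι → s) i => (g i : α)) := by
    intro f hf
    exact ⟨fun i => ⟨f i, hf i⟩, rfl⟩
  exact (Set.countable_range _).mono this

lemma nb_comp_countable_fibers {Z W : Type*} [MeasurableSpace Z] [MeasurableSpace W]
    (τ : Z → Z) (hr : (Set.range τ).Countable)
    (hf : ∀ v, MeasurableSet (τ ⁻¹' {v})) (h : Z → W) :
    Measurable fun z => h (τ z) := by
  intro S _
  have : (fun z => h (τ z)) ⁻¹' S = ⋃ v ∈ {v ∈ Set.range τ | h v ∈ S}, τ ⁻¹' {v} := by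
    ext z
    simp only [Set.mem_preimage, Set.mem_iUnion, Set.mem_setOf_eq, Set.mem_singleton_iff]
    constructor
    · intro hz; exact ⟨τ z, ⟨⟨z, rfl⟩, hz⟩, rfl⟩
    · rintro ⟨v, ⟨_, hv⟩, rfl⟩; exact hv
  rw [this]
  exact MeasurableSet.biUnion (hr.mono (Set.sep_subset _ _)) fun v _ => hf v

lemma nb_pi_coord_null {Y : Type*} [MeasurableSpace Y] (ν : Measure Y)
    [IsProbabilityMeasure ν] {N : Set Y} (hNm : MeasurableSet N) (hN : ν N = 0)
    {m : ℕ} (i : Fin m) :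
    Measure.pi (fun _ : Fin m => ν) {ω : Fin m → Y | ω i ∈ N} = 0 := by
  classical
  have : {ω : Fin m → Y | ω i ∈ N}
      = Set.pi Set.univ (fun j => if j = i then N else Set.univ) := by
    ext ω
    simp only [Set.mem_setOf_eq, Set.mem_pi, Set.mem_univ, true_implies]
    constructor
    · intro h j
      by_cases hj : j = i
      · subst hj; simpa using h
      · simp [hj]
    · intro h
      have := h i
      simpa using this
  rw [this, Measure.pi_pi]
  exact Finset.prod_eq_zero (Finset.mem_univ i) (by simp [hN])

/-- The main induction: the telescoped bound in `ℝ≥0∞`. -/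
lemma nb_main {Y : Type*} [MeasurableSpace Y] (μ : Measure Y) [SigmaFinite μ]
    (fstar : Y → ℝ) (hstarmeas : Measurable fstar) (hstarnn : ∀ y, 0 ≤ fstar y)
    (hstarint : ∫ y, fstar y ∂μ = 1) (hstarpos : ∀ y, 0 < fstar y)
    (d ε : ℝ)
    (A : Set (Y → ℝ)) (hA : MeasurableSet A)
    (hdens : ∀ g ∈ A, Measurable g ∧ (∀ y, 0 ≤ g y) ∧ ∫ y, g y ∂μ = 1)
    (hsep : ∀ g ∈ A,
      d * ε^2 < (1/2) * ∫ y, (Real.sqrt (fstar y) - Real.sqrt (g y))^2 ∂μ)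
    (hconv : ∀ Φ : Measure (Y → ℝ), IsProbabilityMeasure Φ → Φ A = 1 →
      (fun y => ∫ g, g y ∂Φ) ∈ A)
    (ρ : Y → Y) (hρr : (Set.range ρ).Countable) (hρf : ∀ v, MeasurableSet (ρ ⁻¹' {v}))
    (hρae : ∀ᵐ y ∂μ, NBIndist y (ρ y))
    (Pr : Measure (Y → ℝ))
    (g0 : Y → ℝ) (hg0 : g0 ∈ A) :
    ∀ n : ℕ,
    ∫⁻ ω : Fin n → Y,
        (∫⁻ g in A, ENNReal.ofReal (∏ i, g (ω i) / fstar (ω i)) ∂Pr) ^ (1/2 : ℝ)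
        ∂(Measure.pi fun _ : Fin n => μ.withDensity fun y => ENNReal.ofReal (fstar y))
      ≤ (Pr A) ^ (1/2 : ℝ) * (ENNReal.ofReal (1 - d * ε^2)) ^ n := by
  classical
  set ν : Measure Y := μ.withDensity fun y => ENNReal.ofReal (fstar y) with hν
  haveI hνprob : IsProbabilityMeasure ν := by
    constructor
    rw [hν, withDensity_apply _ MeasurableSet.univ, Measure.restrict_univ,
      ← ofReal_integral_eq_lintegral_ofReal
        (nb_integrable_of_integral_eq_one' hstarint)
        (Filter.Eventually.of_forall hstarnn), hstarint]
    simp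
  intro n
  induction n with
  | zero =>
    simp only [Finset.univ_eq_empty, Finset.prod_empty, ENNReal.ofReal_one, pow_zero,
      mul_one]
    rw [setLIntegral_one, lintegral_const]
    haveI : IsProbabilityMeasure (Measure.pi fun _ : Fin 0 => ν) := inferInstance
    rw [measure_univ, mul_one]
  | succ n IH =>
    set νn : Measure (Fin n → Y) := Measure.pi fun _ : Fin n => ν with hνn
    set F : (Fin (n+1) → Y) → ENNReal := fun ω' =>
      (∫⁻ g in A, ENNReal.ofReal (∏ i, g (ω' i) / fstar (ω' i)) ∂Pr) ^ (1/2 : ℝ) with hF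
    set K : Y × (Fin n → Y) → ENNReal := fun p =>
      (∫⁻ g in A, ENNReal.ofReal
        ((∏ i, g (p.2 i) / fstar (p.2 i)) * (g p.1 / fstar p.1)) ∂Pr) ^ (1/2 : ℝ) with hK
    have mp := measurePreserving_piFinSuccAbove (fun _ : Fin (n+1) => ν) (Fin.last n)
    set e := MeasurableEquiv.piFinSuccAbove (fun _ : Fin (n+1) => Y) (Fin.last n) with he
    have h1 : ∫⁻ ω', F ω' ∂(Measure.pi fun _ : Fin (n+1) => ν)
        = ∫⁻ p, F (e.symm p) ∂(ν.prod νn) := by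
      calc ∫⁻ ω', F ω' ∂(Measure.pi fun _ : Fin (n+1) => ν)
          = ∫⁻ ω', F (e.symm (e ω')) ∂(Measure.pi fun _ : Fin (n+1) => ν) := by
            simp only [MeasurableEquiv.symm_apply_apply]
        _ = ∫⁻ p, F (e.symm p) ∂(Measure.map e (Measure.pi fun _ : Fin (n+1) => ν)) :=
            (lintegral_map_equiv (fun p => F (e.symm p)) e).symm
        _ = ∫⁻ p, F (e.symm p) ∂(ν.prod νn) := by rw [mp.map_eq]
    have h2 : ∀ p : Y × (Fin n → Y), F (e.symm p) = K p := by
      rintro ⟨x, q⟩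
      have hsymm : e.symm (x, q) = (Fin.last n).insertNth x q := rfl
      simp only [hF, hK, hsymm]
      congr 1
      refine setLIntegral_congr_fun hA (fun g _ => ?_)
      congr 1
      rw [Fin.prod_univ_castSucc]
      congr 1
      · refine Finset.prod_congr rfl fun i _ => ?_
        rw [← Fin.succAbove_last, Fin.insertNth_apply_succAbove]
      · rw [Fin.insertNth_apply_same]
    have h3 : ∫⁻ p, K p ∂(ν.prod νn) = ∫⁻ q, K (Prod.swap q) ∂(νn.prod ν) := by
      rw [← Measure.prod_swap]
      exact lintegral_map_equiv K
        (MeasurableEquiv.prodComm : (Fin n → Y) × Y ≃ᵐ Y × (Fin n → Y))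
    -- a.e. measurability of the swapped kernel
    set Nb : Set Y := toMeasurable μ {y | ¬ NBIndist y (ρ y)} with hNb
    have hNbm : MeasurableSet Nb := measurableSet_toMeasurable _ _
    have hμNb : μ Nb = 0 := by
      rw [hNb, measure_toMeasurable]
      rw [Filter.eventually_iff, mem_ae_iff] at hρae
      exact hρae
    have hνNb : ν Nb = 0 := withDensity_absolutelyContinuous μ _ hμNb
    have hgood : ∀ y : Y, y ∉ Nb → NBIndist y (ρ y) := by
      intro y hy
      by_contra h
      exact hy (subset_toMeasurable _ _ h)
    have h4 : AEMeasurable (fun q : (Fin n → Y) × Y => K (Prod.swap q)) (νn.prod ν) := by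
      set τ : ((Fin n → Y) × Y) → ((Fin n → Y) × Y) :=
        fun q => (fun i => ρ (q.1 i), ρ q.2) with hτ
      have hτr : (Set.range τ).Countable := by
        refine Set.Countable.mono ?_
          (Set.Countable.prod (nb_countable_pi (s := Set.range ρ) hρr) hρr)
        rintro v ⟨q, rfl⟩
        exact ⟨fun i => ⟨q.1 i, rfl⟩, ⟨q.2, rfl⟩⟩
      have hτf : ∀ v, MeasurableSet (τ ⁻¹' {v}) := by
        rintro ⟨v1, v2⟩
        have : τ ⁻¹' {(v1, v2)} =
            (⋂ i, (fun ω : Fin n → Y => ω i) ⁻¹' (ρ ⁻¹' {v1 i})) ×ˢ (ρ ⁻¹' {v2}) := by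
          ext ⟨q1, q2⟩
          simp only [Set.mem_preimage, Set.mem_singleton_iff, Set.mem_prod, Set.mem_iInter,
            hτ, Prod.mk.injEq, funext_iff]
        rw [this]
        exact (MeasurableSet.iInter fun i => measurable_pi_apply i (hρf (v1 i))).prod
          (hρf v2)
      refine ⟨fun q => K (Prod.swap (τ q)), ?_, ?_⟩
      · exact nb_comp_countable_fibers τ hτr hτf (fun q => K (Prod.swap q))
      · have hsub : {q : (Fin n → Y) × Y | ¬ (K (Prod.swap q) = K (Prod.swap (τ q)))}
            ⊆ (⋃ i, ({ω : Fin n → Y | ω i ∈ Nb} ×ˢ (Set.univ : Set Y)))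
              ∪ ((Set.univ : Set (Fin n → Y)) ×ˢ Nb) := by
          rintro ⟨q1, q2⟩ hq
          simp only [Set.mem_setOf_eq] at hq
          by_contra hcon
          simp only [Set.mem_union, Set.mem_iUnion, Set.mem_prod, Set.mem_univ, and_true,
            true_and, Set.mem_setOf_eq, not_or, not_exists] at hcon
          refine hq ?_
          simp only [hK, hτ, Prod.swap_prod_mk]
          congr 1
          refine setLIntegral_congr_fun hA (fun g hg => ?_)
          have hgm := (hdens g hg).1
          have hind1 : ∀ i, NBIndist (q1 i) (ρ (q1 i)) :=
            fun i => hgood _ (hcon.1 i)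
          have hind2 : NBIndist q2 (ρ q2) := hgood _ hcon.2
          congr 1
          rw [nbIndist_eq hind2 hgm, nbIndist_eq hind2 hstarmeas]
          congr 1
          refine Finset.prod_congr rfl fun i _ => ?_
          rw [nbIndist_eq (hind1 i) hgm, nbIndist_eq (hind1 i) hstarmeas]
        refine ae_iff.2 (measure_mono_null hsub (measure_union_null ?_ ?_))
        · refine measure_iUnion_null fun i => ?_
          rw [Measure.prod_prod]
          rw [nb_pi_coord_null ν hNbm hνNb i]
          simp
        · rw [Measure.prod_prod, hνNb]
          simp
    have h5 := lintegral_prod _ h4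
    have h6 : ∀ ω : Fin n → Y, (∫⁻ y, K (Prod.swap (ω, y)) ∂ν)
        ≤ ENNReal.ofReal (1 - d * ε^2)
          * (∫⁻ g in A, ENNReal.ofReal (∏ i, g (ω i) / fstar (ω i)) ∂Pr) ^ (1/2 : ℝ) := by
      intro ω
      exact nb_step μ fstar hstarmeas hstarnn hstarint hstarpos d ε A hA hdens hsep hconv
        ρ hρr hρf hρae Pr g0 hg0 ω
    calc ∫⁻ ω', F ω' ∂(Measure.pi fun _ : Fin (n+1) => ν)
        = ∫⁻ p, F (e.symm p) ∂(ν.prod νn) := h1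
      _ = ∫⁻ p, K p ∂(ν.prod νn) := lintegral_congr fun p => h2 p
      _ = ∫⁻ q, K (Prod.swap q) ∂(νn.prod ν) := h3
      _ = ∫⁻ ω, ∫⁻ y, K (Prod.swap (ω, y)) ∂ν ∂νn := h5
      _ ≤ ∫⁻ ω, ENNReal.ofReal (1 - d * ε^2)
            * (∫⁻ g in A, ENNReal.ofReal (∏ i, g (ω i) / fstar (ω i)) ∂Pr) ^ (1/2 : ℝ)
          ∂νn := lintegral_mono fun ω => h6 ω
      _ = ENNReal.ofReal (1 - d * ε^2) * ∫⁻ ω,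
            (∫⁻ g in A, ENNReal.ofReal (∏ i, g (ω i) / fstar (ω i)) ∂Pr) ^ (1/2 : ℝ)
          ∂νn := lintegral_const_mul' _ _ ENNReal.ofReal_ne_top
      _ ≤ ENNReal.ofReal (1 - d * ε^2)
            * ((Pr A) ^ (1/2 : ℝ) * (ENNReal.ofReal (1 - d * ε^2)) ^ n) :=
          mul_le_mul_right IH _
      _ = (Pr A) ^ (1/2 : ℝ) * (ENNReal.ofReal (1 - d * ε^2)) ^ (n+1) := by ring

/-- fundamental numerator bound. If Aₙ is convex (closed under
mixtures) and dεₙ²-separated from f⋆ with respect to h = H²/2, then the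
numerator L_{n,n} = ∫_{Aₙ} ∏ᵢ (g(Yᵢ)/f⋆(Yᵢ)) dΠ(g) satisfies
E[L_{n,n}^{1/2}] ≤ Π(Aₙ)^{1/2} e^{−dnεₙ²}. -/
theorem numerator_bound
    {Y : Type*} [MeasurableSpace Y] (μ : Measure Y) [SigmaFinite μ]
    (Pr : Measure (Y → ℝ)) [IsProbabilityMeasure Pr]
    (fstar : Y → ℝ)
    (hstarmeas : Measurable fstar) (hstarnn : ∀ y, 0 ≤ fstar y)
    (hstarint : ∫ y, fstar y ∂μ = 1) (hstarpos : ∀ y, 0 < fstar y)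
    (n : ℕ) (ε d : ℝ) (hε : 0 < ε) (hd : 0 < d)
    (A : Set (Y → ℝ)) (hA : MeasurableSet A)
    (hdens : ∀ g ∈ A, Measurable g ∧ (∀ y, 0 ≤ g y) ∧ ∫ y, g y ∂μ = 1)
    (hsep : ∀ g ∈ A,
      d * ε^2 < (1/2) * ∫ y, (Real.sqrt (fstar y) - Real.sqrt (g y))^2 ∂μ)
    (hconv : ∀ Φ : Measure (Y → ℝ), IsProbabilityMeasure Φ → Φ A = 1 →
      (fun y => ∫ g, g y ∂Φ) ∈ A) :
    ∫ ω : Fin n → Y,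
        Real.sqrt (∫ g in A, ∏ i : Fin n, g (ω i) / fstar (ω i) ∂Pr)
        ∂(Measure.pi fun _ : Fin n => μ.withDensity fun y => ENNReal.ofReal (fstar y))
      ≤ Real.sqrt (Pr A).toReal * Real.exp (-(d * n * ε^2)) := by
    classical
  have hrhs : 0 ≤ Real.sqrt (Pr A).toReal * Real.exp (-(d * n * ε^2)) :=
    mul_nonneg (Real.sqrt_nonneg _) (Real.exp_pos _).le
  rcases Set.eq_empty_or_nonempty A with hAe | ⟨g0, hg0⟩
  · simpa [hAe] using hrhs
  -- Y is nonempty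
  haveI hYne : Nonempty Y := by
    by_contra hY
    haveI : IsEmpty Y := not_nonempty_iff.mp hY
    have : μ = 0 := by
      ext s _
      simp [Set.eq_empty_of_isEmpty s]
    rw [this] at hstarint
    simp at hstarint
  -- countable dependence set for A
  obtain ⟨D0, hD0c, hD0inv⟩ := nb_exists_countable_dependence hA
  obtain ⟨e, hDe⟩ := (hD0c.insert (Classical.arbitrary Y)).exists_eq_range
    (Set.insert_nonempty _ _)
  have hD0sub : D0 ⊆ Set.range e := by
    rw [← hDe]; exact Set.subset_insert _ _
  have hinv : ∀ g g' : Y → ℝ, (∀ y ∈ Set.range e, g y = g' y) → (g ∈ A ↔ g' ∈ A) :=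
    fun g g' h => hD0inv g g' fun y hy => h y (hD0sub hy)
  -- the modified density shows the complement of `range e` is measurable and null
  set h1 : Y → ℝ := fun y => g0 y + (if y ∈ Set.range e then 0 else 1) with hh1
  have hh1A : h1 ∈ A := by
    refine (hinv g0 h1 fun y hy => ?_).mp hg0
    simp only [hh1]
    rw [if_pos hy, add_zero]
  obtain ⟨hh1m, hh1n, hh1i⟩ := hdens h1 hh1A
  obtain ⟨hg0m, hg0n, hg0i⟩ := hdens g0 hg0
  have hsubm : Measurable fun y => h1 y - g0 y := hh1m.sub hg0m
  have hval : ∀ y, h1 y - g0 y = if y ∈ Set.range e then 0 else 1 := by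
    intro y; simp [hh1]
  have hRm : MeasurableSet (Set.range e) := by
    have : (Set.range e)ᶜ = (fun y => h1 y - g0 y) ⁻¹' {1} := by
      ext y
      simp only [Set.mem_compl_iff, Set.mem_preimage, Set.mem_singleton_iff, hval y]
      by_cases hy : y ∈ Set.range e <;> simp [hy]
    rw [← compl_compl (Set.range e), this]
    exact (hsubm (measurableSet_singleton (1:ℝ))).compl
  have hRnull : μ (Set.range e)ᶜ = 0 := by
    have hInt1 : Integrable h1 μ := nb_integrable_of_integral_eq_one' hh1i
    have hInt0 : Integrable g0 μ := nb_integrable_of_integral_eq_one' hg0i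
    have hIsub : Integrable (fun y => h1 y - g0 y) μ := hInt1.sub hInt0
    have hzero : ∫ y, (h1 y - g0 y) ∂μ = 0 := by
      rw [integral_sub hInt1 hInt0, hh1i, hg0i]; ring
    have hnn : 0 ≤ fun y => h1 y - g0 y := by
      intro y
      simp only [Pi.zero_apply]
      rw [hval y]
      split <;> norm_num
    have := (integral_eq_zero_iff_of_nonneg hnn hIsub).mp hzero
    rw [Filter.EventuallyEq, ae_iff] at this
    refine measure_mono_null ?_ this
    intro y hy
    simp only [Set.mem_setOf_eq, Pi.zero_apply, hval y, if_neg hy]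
    norm_num
  obtain ⟨ρ, hρr, hρf, hρe⟩ := nb_exists_retraction e hRm
  have hρae : ∀ᵐ y ∂μ, NBIndist y (ρ y) := by
    rw [Filter.eventually_iff, mem_ae_iff]
    refine measure_mono_null ?_ hRnull
    intro y hy
    simp only [Set.mem_compl_iff, Set.mem_setOf_eq] at hy ⊢
    exact fun hr => hy (hρe y hr)
  -- separation is < 1
  have hdeps : d * ε^2 < 1 := by
    obtain ⟨_, hnn, heq⟩ := nb_cross μ fstar g0 hstarmeas hstarnn hstarint hg0m hg0n hg0i
    have := hsep g0 hg0
    rw [heq] at this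
    linarith
  have hones : (0:ℝ) ≤ 1 - d * ε^2 := by linarith
  -- the main ℝ≥0∞ bound
  have main := nb_main μ fstar hstarmeas hstarnn hstarint hstarpos d ε A hA hdens hsep
    hconv ρ hρr hρf hρae Pr g0 hg0 n
  set ν : Measure Y := μ.withDensity fun y => ENNReal.ofReal (fstar y) with hν
  set L : (Fin n → Y) → ℝ := fun ω => ∫ g in A, ∏ i : Fin n, g (ω i) / fstar (ω i) ∂Pr
    with hL
  set Lam : (Fin n → Y) → ENNReal := fun ω =>
    ∫⁻ g in A, ENNReal.ofReal (∏ i : Fin n, g (ω i) / fstar (ω i)) ∂Pr with hLam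
  by_cases hmeas : AEStronglyMeasurable (fun ω => Real.sqrt (L ω))
      (Measure.pi fun _ : Fin n => ν)
  · rw [integral_eq_lintegral_of_nonneg_ae
      (Filter.Eventually.of_forall fun ω => Real.sqrt_nonneg _) hmeas]
    have hle1 : ∀ ω, ENNReal.ofReal (Real.sqrt (L ω)) ≤ (Lam ω) ^ (1/2 : ℝ) := by
      intro ω
      have hpm : Measurable fun g : Y → ℝ => ∏ i : Fin n, g (ω i) / fstar (ω i) :=
        Finset.measurable_prod _ fun i _ => (measurable_pi_apply (ω i)).div_const _
      have hpn : ∀ᵐ g ∂(Pr.restrict A), 0 ≤ ∏ i : Fin n, g (ω i) / fstar (ω i) := by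
        filter_upwards [ae_restrict_mem hA] with g hg
        exact Finset.prod_nonneg fun i _ =>
          div_nonneg ((hdens g hg).2.1 _) (hstarpos _).le
      have hnorm : ∫⁻ g, (‖∏ i : Fin n, g (ω i) / fstar (ω i)‖₊ : ENNReal)
          ∂(Pr.restrict A) = Lam ω := by
        refine lintegral_congr_ae ?_
        filter_upwards [hpn] with g hg
        exact Real.enorm_eq_ofReal hg
      rcases eq_or_ne (Lam ω) ⊤ with hT | hT
      · have : ¬ Integrable (fun g : Y → ℝ => ∏ i : Fin n, g (ω i) / fstar (ω i))
            (Pr.restrict A) := by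
          rintro ⟨-, hfin⟩
          rw [HasFiniteIntegral] at hfin
          change ∫⁻ g, (‖∏ i : Fin n, g (ω i) / fstar (ω i)‖₊ : ENNReal) ∂(Pr.restrict A) < ⊤ at hfin
          rw [hnorm, hT] at hfin
          exact absurd hfin (lt_irrefl _)
        rw [hL]
        simp only []
        rw [integral_undef this]
        simp
      · have hLeq : L ω = (Lam ω).toReal := by
          rw [hL]
          simp only []
          rw [integral_eq_lintegral_of_nonneg_ae hpn hpm.aestronglyMeasurable]
        rw [hLeq, Real.sqrt_eq_rpow, ENNReal.toReal_rpow,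
          ENNReal.ofReal_toReal (ENNReal.rpow_ne_top_of_nonneg (by norm_num) hT)]
    have hchain : ∫⁻ ω, ENNReal.ofReal (Real.sqrt (L ω))
          ∂(Measure.pi fun _ : Fin n => ν)
        ≤ (Pr A) ^ (1/2 : ℝ) * (ENNReal.ofReal (1 - d * ε^2)) ^ n :=
      le_trans (lintegral_mono fun ω => hle1 ω) main
    have hBne : (Pr A) ^ (1/2 : ℝ) * (ENNReal.ofReal (1 - d * ε^2)) ^ n ≠ ⊤ :=
      ENNReal.mul_ne_top (ENNReal.rpow_ne_top_of_nonneg (by norm_num) (measure_ne_top _ _))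
        (ENNReal.pow_ne_top ENNReal.ofReal_ne_top)
    refine le_trans (ENNReal.toReal_mono hBne hchain) ?_
    rw [ENNReal.toReal_mul, ← ENNReal.toReal_rpow, ENNReal.toReal_pow,
      ENNReal.toReal_ofReal hones, ← Real.sqrt_eq_rpow]
    refine mul_le_mul_of_nonneg_left ?_ (Real.sqrt_nonneg _)
    have h1x : 1 - d * ε^2 ≤ Real.exp (-(d * ε^2)) := by
      have := Real.add_one_le_exp (-(d * ε^2))
      linarith
    calc (1 - d * ε^2) ^ n ≤ (Real.exp (-(d * ε^2))) ^ n :=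
          pow_le_pow_left₀ hones h1x n
      _ = Real.exp (-(d * n * ε^2)) := by
          rw [← Real.exp_nat_mul]
          congr 1
          ring
  · rw [integral_non_aestronglyMeasurable hmeas]
    exact hrhs
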